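/- Let φ : ℕ → ℕ and c ≥ 1 be such that φ(0) = 0 and for every n ≥ 1, φ(n) ≤ 1 + Σᵢ φ(nᵢ) for some finite sequence of nonnegative integers nᵢ with Σᵢ nᵢ ≤ n + c and each nᵢ < n. Then φ is bounded above by a linear function: there exists K > 0 such that φ(n) ≤ K·n for all n ≥ 1. -/

import Mathlib

lemma arith (B K N c t s q U : ℤ) (hB : 1 ≤ B) (hc : 1 ≤ c)
    (hs : 0 ≤ s) (hq : 0 ≤ q) (hU : 0 ≤ U) (ht : 0 ≤ t)
    (hK : K = (4*c+2)*B+2) (hN : N = 2*c+2)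
    (hF2 : U + s + q*N ≤ N+1+t+c) (hF3 : U ≤ q*t) :
    1 + (s*B + q*B + K*U) ≤ B + K*(t+1) := by
  have hB0 : (0:ℤ) ≤ B := by linarith
  have hc0 : (0:ℤ) ≤ c := by linarith
  rcases lt_trichotomy q 1 with h0 | h1 | h2
  · -- q = 0
    have hq0 : q = 0 := by omega
    subst hq0
    have hU0 : U = 0 := by nlinarith
    subst hU0
    have hsle : s ≤ 3*c+3+t := by omega
    subst hK hN
    nlinarith [mul_le_mul_of_nonneg_right hsle hB0, mul_nonneg ht hB0, mul_nonneg (mul_nonneg hc0 ht) hB0]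
  · -- q = 1
    subst h1
    have hUt : U ≤ t := by omega
    have hUs : U + s ≤ 1 + t + c := by omega
    rcases le_or_gt s (2*c) with hsle | hsgt
    · subst hK hN
      nlinarith [mul_le_mul_of_nonneg_right hsle hB0,
        mul_le_mul_of_nonneg_left hUt (by nlinarith : (0:ℤ) ≤ (4*c+2)*B+2)]
    · have hKpos : 0 ≤ K := by nlinarith
      have h1 : K*(U+s) ≤ K*(1+t+c) := mul_le_mul_of_nonneg_left hUs hKpos
      subst hK hN
      nlinarith [mul_le_mul_of_nonneg_right (le_of_lt hsgt) hB0, mul_nonneg hs hB0,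
        mul_nonneg hc0 hB0, mul_nonneg (mul_nonneg hc0 hc0) hB0]
  · -- q ≥ 2
    have hKpos : 0 ≤ K := by nlinarith
    have hUle : U ≤ N+1+t+c - s - q*N := by omega
    have h1 : K*U ≤ K*(N+1+t+c - s - q*N) := mul_le_mul_of_nonneg_left hUle hKpos
    have hKB : B ≤ K := by nlinarith
    have h2 : s*B ≤ s*K := mul_le_mul_of_nonneg_left hKB hs
    subst hK hN
    nlinarith [mul_nonneg (by omega : (0:ℤ) ≤ q-2) (by nlinarith : (0:ℤ) ≤ ((4*c+2)*B+2)*(2*c+2) - B),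
      mul_nonneg hq hB0, mul_nonneg hc0 hB0]

namespace Stmt7Aux

lemma sum_map_add (f h : ℕ → ℕ) (l : List ℕ) :
    (l.map (fun m => f m + h m)).sum = (l.map f).sum + (l.map h).sum := by
  induction l with
  | nil => simp
  | cons a t ih => simp [ih]; omega

lemma sum_map_le (f h : ℕ → ℕ) (l : List ℕ) (hle : ∀ m ∈ l, f m ≤ h m) :
    (l.map f).sum ≤ (l.map h).sum := by
  induction l with
  | nil => simp
  | cons a t ih =>
    have h1 := hle a (by simp)
    have h2 := ih (fun m hm => hle m (by simp [hm]))
    simp only [List.map_cons, List.sum_cons]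
    omega

lemma sum_map_mul_right (f : ℕ → ℕ) (a : ℕ) (l : List ℕ) :
    (l.map (fun m => f m * a)).sum = (l.map f).sum * a := by
  induction l with
  | nil => simp
  | cons b t ih => simp [ih, add_mul]

lemma sum_map_mul_left (f : ℕ → ℕ) (a : ℕ) (l : List ℕ) :
    (l.map (fun m => a * f m)).sum = a * (l.map f).sum := by
  induction l with
  | nil => simp
  | cons b t ih => simp [ih, mul_add]

/-- The dominating function. -/
def gg (c n : ℕ) : ℕ :=
  if n = 0 then 0
  else if n ≤ 2*c+2 then (3*c+3)^n
  else (3*c+3)^(2*c+2) + ((4*c+2)*(3*c+3)^(2*c+2)+2) * (n - (2*c+2))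

lemma gg_zero (c : ℕ) : gg c 0 = 0 := by simp [gg]

lemma gg_small (c n : ℕ) (h1 : 1 ≤ n) (h2 : n ≤ 2*c+2) : gg c n = (3*c+3)^n := by
  unfold gg
  rw [if_neg (by omega), if_pos h2]

lemma gg_big (c n : ℕ) (h : 2*c+2 < n) :
    gg c n = (3*c+3)^(2*c+2) + ((4*c+2)*(3*c+3)^(2*c+2)+2) * (n - (2*c+2)) := by
  unfold gg
  rw [if_neg (by omega), if_neg (by omega)]

lemma key (c n : ℕ) (hc : 1 ≤ c) (hn : 1 ≤ n) (l : List ℕ)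
    (hlt : ∀ m ∈ l, m < n) (hsum : l.sum ≤ n + c) :
    1 + (l.map (gg c)).sum ≤ gg c n := by
  have hD1 : 1 ≤ 3*c+3 := by omega
  have hB1 : 1 ≤ (3*c+3)^(2*c+2) := Nat.one_le_pow _ _ (by omega)
  rcases le_or_gt n (2*c+2) with hsmall | hbig
  · -- small case
    have hgn : gg c n = (3*c+3)^n := gg_small c n hn hsmall
    have hpt : ∀ m ∈ l, gg c m ≤ m * (3*c+3)^(n-1) := by
      intro m hm
      have hmn : m < n := hlt m hm
      rcases Nat.eq_zero_or_pos m with h0 | h1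
      · simp [h0, gg_zero]
      · rw [gg_small c m h1 (by omega)]
        calc (3*c+3)^m ≤ (3*c+3)^(n-1) := Nat.pow_le_pow_right hD1 (by omega)
          _ ≤ m * (3*c+3)^(n-1) := Nat.le_mul_of_pos_left _ h1
    have h2 : (l.map (gg c)).sum ≤ (n+c) * (3*c+3)^(n-1) := by
      calc (l.map (gg c)).sum ≤ (l.map (fun m => m * (3*c+3)^(n-1))).sum :=
            sum_map_le _ _ l hpt
        _ = (l.map (fun m => m)).sum * (3*c+3)^(n-1) := sum_map_mul_right _ _ l
        _ = l.sum * (3*c+3)^(n-1) := by simp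
        _ ≤ (n+c) * (3*c+3)^(n-1) := Nat.mul_le_mul_right _ hsum
    have h3 : (n+c+1) * (3*c+3)^(n-1) ≤ (3*c+3)^n := by
      calc (n+c+1) * (3*c+3)^(n-1) ≤ (3*c+3) * (3*c+3)^(n-1) :=
            Nat.mul_le_mul_right _ (by omega)
        _ = (3*c+3)^(n-1+1) := by rw [pow_succ]; ring
        _ = (3*c+3)^n := by congr 1; omega
    have h4 : (n+c) * (3*c+3)^(n-1) + (3*c+3)^(n-1) = (n+c+1) * (3*c+3)^(n-1) := by ring
    have hp1 : 1 ≤ (3*c+3)^(n-1) := Nat.one_le_pow _ _ (by omega)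
    rw [hgn]
    omega
  · -- big case
    set N := 2*c+2 with hN
    set B := (3*c+3)^(2*c+2) with hBdef
    set K := (4*c+2)*B+2 with hKdef
    set t := n - (N+1) with ht
    have hnt : n = N + 1 + t := by omega
    have hgn : gg c n = B + K * (t+1) := by
      rw [gg_big c n hbig]
      congr 1
      congr 1
      omega
    -- indicator functions
    set indS : ℕ → ℕ := fun m => if 0 < m ∧ m ≤ N then 1 else 0 with hindS
    set indL : ℕ → ℕ := fun m => if N < m then 1 else 0 with hindL
    set s := (l.map indS).sum with hs
    set q := (l.map indL).sum with hq
    set U := (l.map (fun m => m - N)).sum with hU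
    -- F1 : pointwise domination of gg
    have hpt : ∀ m ∈ l, gg c m ≤ (indS m * B + indL m * B) + K * (m - N) := by
      intro m _
      rcases Nat.eq_zero_or_pos m with h0 | h1
      · simp [h0, gg_zero, hindS, hindL]
      · rcases le_or_gt m N with hle | hgt
        · rw [gg_small c m h1 hle]
          have : (3*c+3)^m ≤ B := Nat.pow_le_pow_right hD1 hle
          have hS : indS m = 1 := by simp [hindS, h1, hle]
          have : m - N = 0 := by omega
          simp [hS, this]
          have : (3*c+3)^m ≤ B := Nat.pow_le_pow_right hD1 hle
          omega
        · rw [gg_big c m hgt]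
          have hS : indS m = 0 := by simp [hindS]; omega
          have hL : indL m = 1 := by simp [hindL, hgt]
          simp [hS, hL]
          exact le_refl _
    have hF1 : (l.map (gg c)).sum ≤ (s*B + q*B) + K*U := by
      calc (l.map (gg c)).sum
          ≤ (l.map (fun m => (indS m * B + indL m * B) + K * (m - N))).sum :=
            sum_map_le _ _ l hpt
        _ = (l.map (fun m => indS m * B + indL m * B)).sum
              + (l.map (fun m => K * (m - N))).sum := sum_map_add _ _ l
        _ = ((l.map (fun m => indS m * B)).sum + (l.map (fun m => indL m * B)).sum)
              + K * U := by rw [sum_map_add, sum_map_mul_left]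
        _ = (s*B + q*B) + K*U := by rw [sum_map_mul_right, sum_map_mul_right]
    -- F2
    have hF2 : U + s + q*N ≤ n + c := by
      have hpt2 : ∀ m ∈ l, (m - N) + (indS m + indL m * N) ≤ m := by
        intro m _
        simp only [hindS, hindL]
        split_ifs <;> omega
      have e1 : (l.map (fun m => (m - N) + (indS m + indL m * N))).sum
          = U + (s + q*N) := by
        rw [sum_map_add]
        congr 1
        rw [sum_map_add, sum_map_mul_right]
      have e2 : (l.map (fun m => (m - N) + (indS m + indL m * N))).sum
          ≤ (l.map (fun m => m)).sum := sum_map_le _ _ l hpt2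
      have e3 : (l.map (fun m => m)).sum = l.sum := by simp
      omega
    -- F3
    have hF3 : U ≤ q * t := by
      have hpt3 : ∀ m ∈ l, m - N ≤ indL m * t := by
        intro m hm
        have := hlt m hm
        simp only [hindL]
        split_ifs <;> omega
      calc U ≤ (l.map (fun m => indL m * t)).sum := sum_map_le _ _ l hpt3
        _ = q * t := sum_map_mul_right _ _ l
    -- final arithmetic in ℤ
    rw [hgn]
    have harith := arith (B : ℤ) (K : ℤ) (N : ℤ) (c : ℤ) (t : ℤ) (s : ℤ) (q : ℤ) (U : ℤ)
      (by exact_mod_cast hB1) (by exact_mod_cast hc)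
      (by positivity) (by positivity) (by positivity) (by positivity)
      (by push_cast [hKdef]; ring) (by push_cast [hN]; ring)
      (by
        have hF2' : U + s + q*N ≤ N+1+t+c := by rw [hnt] at hF2; omega
        exact_mod_cast hF2')
      (by exact_mod_cast hF3)
    have : (1 : ℤ) + ((s:ℤ)*B + q*B + K*U) ≤ (B:ℤ) + K*(t+1) := harith
    have hfin : 1 + (s*B + q*B + K*U) ≤ B + K*(t+1) := by exact_mod_cast this
    omega

end Stmt7Aux
open Stmt7Aux in
/-- Any φ with φ(0)=0 satisfying the decomposability recursion φ(n) ≤ 1 + Σ φ(nᵢ) with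
Σ nᵢ ≤ n + c and nᵢ < n is bounded above by a linear function. -/
theorem stmt_7 (c : ℕ) (hc : 1 ≤ c) (φ : ℕ → ℕ) (hφ0 : φ 0 = 0)
    (hφ : ∀ n : ℕ, 1 ≤ n → ∃ l : List ℕ,
      l.sum ≤ n + c ∧ (∀ m ∈ l, m < n) ∧ φ n ≤ 1 + (l.map φ).sum) :
    ∃ K : ℕ, 0 < K ∧ ∀ n : ℕ, 1 ≤ n → φ n ≤ K * n := by
  have hmain : ∀ n, φ n ≤ gg c n := by
    intro n
    induction n using Nat.strong_induction_on with
    | _ n ih =>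
      rcases Nat.eq_zero_or_pos n with h0 | h1
      · simp [h0, hφ0, gg_zero]
      · obtain ⟨l, hs, hm, hb⟩ := hφ n h1
        have hmapped : (l.map φ).sum ≤ (l.map (gg c)).sum :=
          sum_map_le _ _ l (fun m hm' => ih m (hm m hm'))
        have hk := key c n hc h1 l hm hs
        omega
  refine ⟨(3*c+3)^(2*c+2) + ((4*c+2)*(3*c+3)^(2*c+2)+2), by positivity, fun n hn => ?_⟩
  have hB1 : 1 ≤ (3*c+3)^(2*c+2) := Nat.one_le_pow _ _ (by omega)
  refine le_trans (hmain n) ?_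
  rcases le_or_gt n (2*c+2) with hsmall | hbig
  · rw [gg_small c n hn hsmall]
    calc (3*c+3)^n ≤ (3*c+3)^(2*c+2) := Nat.pow_le_pow_right (by omega) hsmall
      _ ≤ ((3*c+3)^(2*c+2) + ((4*c+2)*(3*c+3)^(2*c+2)+2)) * 1 := by omega
      _ ≤ ((3*c+3)^(2*c+2) + ((4*c+2)*(3*c+3)^(2*c+2)+2)) * n :=
          Nat.mul_le_mul_left _ hn
  · rw [gg_big c n hbig]
    have h1 : ((4*c+2)*(3*c+3)^(2*c+2)+2) * (n - (2*c+2))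
        ≤ ((4*c+2)*(3*c+3)^(2*c+2)+2) * n := Nat.mul_le_mul_left _ (by omega)
    have h2 : (3*c+3)^(2*c+2) ≤ (3*c+3)^(2*c+2) * n := Nat.le_mul_of_pos_right _ (by omega)
    have h3 : ((3*c+3)^(2*c+2) + ((4*c+2)*(3*c+3)^(2*c+2)+2)) * n
        = (3*c+3)^(2*c+2) * n + ((4*c+2)*(3*c+3)^(2*c+2)+2) * n := by ring
    omega
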